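/- Let V, τ, h, χ, Θ be as above. Then for every m ∈ (0,1], Θ(m) is the unique solution x ∈ (0,1] of the fixed point equation x = χ(−τ(x), m), i.e., x = h⁻¹(h(m)e^{−τ(x)}). -/

import Mathlib

open Set Real MeasureTheory

/-- For every `m ∈ (0,1]`, `Θ m` is the unique solution `x ∈ (0,1]`
of the fixed point equation `x = χ (−τ x) m`, i.e. `x = h⁻¹ (h m * e^{−τ x})`. -/
theorem theta_fixed_point
    (V : ℝ → ℝ)
    (hV : ContDiffOn ℝ 1 V (Icc 0 1))
    (hVpos : ∀ m ∈ Ioc (0:ℝ) 1, 0 < V m)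
    (hV0 : V 0 = 0)
    (hdiv : ∀ m ∈ Ioc (0:ℝ) 1, ¬ MeasureTheory.IntegrableOn (fun s => 1 / V s) (Ioc 0 m))
    (τ : ℝ → ℝ)
    (hτcont : ContinuousOn τ (Icc 0 1))
    (hτpos : ∀ m ∈ Icc (0:ℝ) 1, 0 < τ m)
    (hτC1 : ContDiffOn ℝ 1 τ (Ioc 0 1))
    (hτ' : ∀ m ∈ Ioc (0:ℝ) 1, deriv τ m + 1 / V m > 0)
    (h hinv : ℝ → ℝ)
    (hh : ∀ m ∈ Ioc (0:ℝ) 1, h m = Real.exp (-(∫ s in Ioc m 1, 1 / V s)))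
    (hh0 : h 0 = 0)
    (hmaps : ∀ m ∈ Icc (0:ℝ) 1, h m ∈ Icc (0:ℝ) 1)
    (hleft : ∀ m ∈ Icc (0:ℝ) 1, hinv (h m) = m)
    (hright : ∀ y ∈ Icc (0:ℝ) 1, h (hinv y) = y)
    (χ : ℝ → ℝ → ℝ)
    (hχ : ∀ s ≤ (0:ℝ), ∀ m ∈ Icc (0:ℝ) 1, χ s m = hinv (h m * Real.exp s))
    (Θ : ℝ → ℝ)
    (hΘ : ∀ m ∈ Ioc (0:ℝ) 1, Θ m ∈ Ioo 0 m ∧ (∫ s in Ioc (Θ m) m, 1 / V s) = τ (Θ m)) :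
    ∀ m ∈ Ioc (0:ℝ) 1,
      Θ m = χ (-τ (Θ m)) m ∧
      (∀ x ∈ Ioc (0:ℝ) 1, x = χ (-τ x) m → x = Θ m) := by
  -- basic facts about 1/V
  have hVcont : ContinuousOn V (Icc 0 1) := hV.continuousOn
  have hint : ∀ a b : ℝ, 0 < a → b ≤ 1 →
      IntegrableOn (fun s => 1 / V s) (Ioc a b) := by
    intro a b ha hb
    rcases le_or_gt a b with hab | hab
    · have hsub : Icc a b ⊆ Ioc 0 1 := fun s hs => ⟨lt_of_lt_of_le ha hs.1, hs.2.trans hb⟩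
      have hsub2 : Icc a b ⊆ Icc 0 1 := fun s hs => ⟨(lt_of_lt_of_le ha hs.1).le, hs.2.trans hb⟩
      have hc : ContinuousOn (fun s => 1 / V s) (Icc a b) :=
        ContinuousOn.div continuousOn_const (hVcont.mono hsub2)
          (fun s hs => (hVpos s (hsub hs)).ne')
      exact (hc.integrableOn_Icc).mono_set Ioc_subset_Icc_self
    · simp [Ioc_eq_empty (not_lt.mpr hab.le)]
  have hnonneg : ∀ a b : ℝ, 0 ≤ a → b ≤ 1 →
      0 ≤ ∫ s in Ioc a b, 1 / V s := by
    intro a b ha hb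
    refine setIntegral_nonneg measurableSet_Ioc fun s hs => ?_
    exact le_of_lt (one_div_pos.mpr (hVpos s ⟨lt_of_le_of_lt ha hs.1, hs.2.trans hb⟩))
  -- splitting lemma
  have hsplit : ∀ a b : ℝ, 0 < a → a ≤ b → b ≤ 1 →
      (∫ s in Ioc a 1, 1 / V s) = (∫ s in Ioc a b, 1 / V s) + ∫ s in Ioc b 1, 1 / V s := by
    intro a b ha hab hb1
    rw [← Ioc_union_Ioc_eq_Ioc hab hb1]
    exact setIntegral_union (Ioc_disjoint_Ioc_of_le le_rfl) measurableSet_Ioc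
      (hint a b ha hb1) (hint b 1 (lt_of_lt_of_le ha hab) le_rfl)
  intro m hm
  obtain ⟨hΘmem, hΘeq⟩ := hΘ m hm
  have hΘIoc : Θ m ∈ Ioc (0:ℝ) 1 := ⟨hΘmem.1, hΘmem.2.le.trans hm.2⟩
  have hΘIcc : Θ m ∈ Icc (0:ℝ) 1 := ⟨hΘIoc.1.le, hΘIoc.2⟩
  have hmIcc : m ∈ Icc (0:ℝ) 1 := ⟨hm.1.le, hm.2⟩
  -- key equivalence: for x ∈ (0,1], x = χ(-τ x) m  ↔  h x = h m * exp(-τ x)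
  have key : ∀ x ∈ Ioc (0:ℝ) 1, x = χ (-τ x) m ↔
      (∫ s in Ioc x 1, 1 / V s) = (∫ s in Ioc m 1, 1 / V s) + τ x := by
    intro x hx
    have hxIcc : x ∈ Icc (0:ℝ) 1 := ⟨hx.1.le, hx.2⟩
    have hτx : 0 < τ x := hτpos x hxIcc
    rw [hχ (-τ x) (by linarith) m hmIcc]
    have hy : h m * Real.exp (-τ x) ∈ Icc (0:ℝ) 1 := by
      have h1 := hmaps m hmIcc
      have h2 : Real.exp (-τ x) ≤ 1 := Real.exp_le_one_iff.mpr (by linarith)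
      constructor
      · exact mul_nonneg h1.1 (Real.exp_pos _).le
      · calc h m * Real.exp (-τ x) ≤ 1 * 1 := by
              apply mul_le_mul h1.2 h2 (Real.exp_pos _).le zero_le_one
        _ = 1 := by ring
    constructor
    · intro hfix
      have hx2 : h x = h m * Real.exp (-τ x) := by
        have := congrArg h hfix
        rwa [hright _ hy] at this
      rw [hh x hx, hh m hm, ← Real.exp_add, Real.exp_eq_exp] at hx2
      linarith
    · intro heq
      have hx2 : h x = h m * Real.exp (-τ x) := by
        rw [hh x hx, hh m hm, ← Real.exp_add, Real.exp_eq_exp]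
        linarith
      rw [← hx2, hleft x hxIcc]
  -- Θ m satisfies the integral equation
  have hΘint : (∫ s in Ioc (Θ m) 1, 1 / V s)
      = (∫ s in Ioc m 1, 1 / V s) + τ (Θ m) := by
    rw [hsplit (Θ m) m hΘmem.1 hΘmem.2.le hm.2, hΘeq]; ring
  refine ⟨(key (Θ m) hΘIoc).mpr hΘint, ?_⟩
  -- uniqueness
  intro x hx hfix
  have hxint := (key x hx).mp hfix
  have hτx : 0 < τ x := hτpos x ⟨hx.1.le, hx.2⟩
  -- x < m
  have hxm : x < m := by
    by_contra hcon
    push_neg at hcon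
    have := hsplit m x hm.1 hcon hx.2
    have h0 := hnonneg m x hm.1.le hx.2
    linarith
  -- strictly decreasing F on Ioo 0 1
  set F : ℝ → ℝ := fun a => (∫ s in a..(1:ℝ), 1 / V s) - τ a with hF
  have hFanti : StrictAntiOn F (Ioo 0 1) := by
    have hderiv : ∀ a ∈ Ioo (0:ℝ) 1, HasDerivAt F (-(1 / V a) - deriv τ a) a := by
      intro a ha
      have haIoc : a ∈ Ioc (0:ℝ) 1 := ⟨ha.1, ha.2.le⟩
      have hcontf : ∀ z ∈ Ioo (0:ℝ) 1, ContinuousAt (fun s => 1 / V s) z := by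
        intro z hz
        have hVz : ContinuousAt V z :=
          hVcont.continuousAt (Icc_mem_nhds hz.1 hz.2)
        exact continuousAt_const.div hVz (hVpos z ⟨hz.1, hz.2.le⟩).ne'
      have h1 : HasDerivAt (fun u => ∫ s in u..(1:ℝ), 1 / V s) (-(1 / V a)) a := by
        refine intervalIntegral.integral_hasDerivAt_left ?_ ?_ (hcontf a ha)
        · rw [intervalIntegrable_iff_integrableOn_Ioc_of_le ha.2.le]
          exact hint a 1 ha.1 le_rfl
        · exact ContinuousAt.stronglyMeasurableAtFilter isOpen_Ioo hcontf a ha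
      have h2 : HasDerivAt τ (deriv τ a) a := by
        have hd : DifferentiableAt ℝ τ a :=
          (hτC1.differentiableOn one_ne_zero).differentiableAt
            (Ioc_mem_nhds ha.1 ha.2)
        exact hd.hasDerivAt
      exact h1.sub h2
    refine strictAntiOn_of_deriv_neg (convex_Ioo 0 1) ?_ ?_
    · intro a ha
      exact (hderiv a ha).continuousAt.continuousWithinAt
    · intro a ha
      rw [interior_Ioo] at ha
      rw [(hderiv a ha).deriv]
      have := hτ' a ⟨ha.1, ha.2.le⟩
      linarith
  have hxIoo : x ∈ Ioo (0:ℝ) 1 := ⟨hx.1, lt_of_lt_of_le hxm hm.2⟩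
  have hΘIoo : Θ m ∈ Ioo (0:ℝ) 1 := ⟨hΘmem.1, lt_of_lt_of_le hΘmem.2 hm.2⟩
  have hFx : F x = F (Θ m) := by
    have e1 : (∫ s in x..(1:ℝ), 1 / V s) = ∫ s in Ioc x 1, 1 / V s :=
      intervalIntegral.integral_of_le hx.2
    have e2 : (∫ s in (Θ m)..(1:ℝ), 1 / V s) = ∫ s in Ioc (Θ m) 1, 1 / V s :=
      intervalIntegral.integral_of_le hΘIoc.2
    simp only [hF, e1, e2, hxint, hΘint]
    ring
  exact hFanti.injOn hxIoo hΘIoo hFx
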